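/- Let m ≥ 0 and h ≥ k ≥ 1 be integers. Then the q-Bernoulli number of order k decomposes as a multinomial convolution of q-Bernoulli numbers of order 1: β_m^{(h,k)} = Σ over all k-tuples (i_1,…,i_k) of nonnegative integers with i_1+⋯+i_k = m of (m!/(i_1!·i_2!⋯i_k!)) · Π_{j=1}^{k} β_{i_j}^{(h−j+1+i_1+⋯+i_{j−1}, 1)}, an identity in F = ℂ(q). -/

import Mathlib

section
variable {R : Type*} [CommRing R]

def Dop (f : ℕ → R) : ℕ → R := fun x => f x - f (x + 1)

lemma Dop_apply (f : ℕ → R) (x : ℕ) : Dop f x = f x - f (x + 1) := rfl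

lemma Dop_iter_apply_sub (f : ℕ → R) (m x : ℕ) :
    Dop^[m + 1] f x = Dop^[m] f x - Dop^[m] f (x + 1) := by
  rw [Function.iterate_succ_apply']; rfl

lemma Dop_iter_shift_eq (f : ℕ → R) (m x : ℕ) :
    Dop^[m] f (x + 1) = Dop^[m] f x - Dop^[m + 1] f x := by
  rw [Dop_iter_apply_sub]; ring

lemma Dop_add (f g : ℕ → R) : Dop (fun x => f x + g x) = fun x => Dop f x + Dop g x := by
  funext x; simp only [Dop_apply]; ring

lemma Dop_iter_add (f g : ℕ → R) (m : ℕ) :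
    Dop^[m] (fun x => f x + g x) = fun x => Dop^[m] f x + Dop^[m] g x := by
  induction m generalizing f g with
  | zero => rfl
  | succ n ih =>
    rw [Function.iterate_succ_apply, Function.iterate_succ_apply,
      Function.iterate_succ_apply, Dop_add, ih]

lemma Dop_shift (f : ℕ → R) (m x : ℕ) :
    Dop^[m] (fun a => f (a + 1)) x = Dop^[m] f (x + 1) := by
  induction m generalizing x with
  | zero => rfl
  | succ n ih =>
    rw [Function.iterate_succ_apply', Function.iterate_succ_apply', Dop_apply, Dop_apply, ih, ih]

/-- Leibniz rule for the iterated backward difference of a product. -/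
lemma Dop_iter_mul (f g : ℕ → R) (m : ℕ) (x : ℕ) :
    Dop^[m] (fun i => f i * g i) x
      = ∑ a ∈ Finset.range (m + 1),
          (m.choose a : R) * (Dop^[a] f x * Dop^[m - a] g (x + a)) := by
  induction m generalizing f g with
  | zero => simp
  | succ n ih =>
    rw [Function.iterate_succ_apply]
    have hd : Dop (fun i => f i * g i)
        = fun i => (Dop f i * g i) + (f (i + 1) * Dop g i) := by
      funext i; simp only [Dop_apply]; ring
    rw [hd, Dop_iter_add]
    dsimp only
    rw [ih (Dop f) g, ih (fun i => f (i+1)) (Dop g)]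
    -- rewrite iterates
    have e1 : ∀ a : ℕ, Dop^[a] (Dop f) x = Dop^[a+1] f x := fun a => by
      rw [Function.iterate_succ_apply]
    have e2 : ∀ a : ℕ, Dop^[a] (fun i => f (i+1)) x = Dop^[a] f x - Dop^[a+1] f x := fun a => by
      rw [Dop_shift, Dop_iter_shift_eq]
    have e3 : ∀ a : ℕ, Dop^[n-a] (Dop g) (x+a) = Dop^[(n-a)+1] g (x+a) := fun a => by
      rw [Function.iterate_succ_apply]
    have e4 : ∀ a : ℕ, Dop^[n-a] g (x+a)
        = Dop^[n-a] g (x+a+1) + Dop^[(n-a)+1] g (x+a) := fun a => by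
      rw [Dop_iter_shift_eq]; ring
    simp only [e1, e2, e3]
    -- expand the first sum using e4 and cancel
    have split1 : ∑ a ∈ Finset.range (n+1), (n.choose a : R) * (Dop^[a+1] f x * Dop^[n-a] g (x+a))
        = ∑ a ∈ Finset.range (n+1), (n.choose a : R) * (Dop^[a+1] f x * Dop^[n-a] g (x+a+1))
          + ∑ a ∈ Finset.range (n+1), (n.choose a : R) * (Dop^[a+1] f x * Dop^[(n-a)+1] g (x+a)) := by
      rw [← Finset.sum_add_distrib]
      refine Finset.sum_congr rfl fun a _ => by rw [e4 a]; ring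
    have split2 : ∑ a ∈ Finset.range (n+1),
          (n.choose a : R) * ((Dop^[a] f x - Dop^[a+1] f x) * Dop^[(n-a)+1] g (x+a))
        = ∑ a ∈ Finset.range (n+1), (n.choose a : R) * (Dop^[a] f x * Dop^[(n-a)+1] g (x+a))
          - ∑ a ∈ Finset.range (n+1), (n.choose a : R) * (Dop^[a+1] f x * Dop^[(n-a)+1] g (x+a)) := by
      rw [← Finset.sum_sub_distrib]
      refine Finset.sum_congr rfl fun a _ => by ring
    rw [split1, split2]
    have hS3 : ∑ a ∈ Finset.range (n+1), (n.choose a : R) * (Dop^[a] f x * Dop^[(n-a)+1] g (x+a))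
        = (∑ a ∈ Finset.range n,
            ((n.choose (a+1) : ℕ) : R) * (Dop^[a+1] f x * Dop^[n-a] g (x+a+1)))
          + Dop^[0] f x * Dop^[n+1] g x := by
      rw [Finset.sum_range_succ']
      congr 1
      · refine Finset.sum_congr rfl fun a ha => ?_
        have h1 : n - (a+1) + 1 = n - a := by
          have := Finset.mem_range.mp ha; omega
        rw [h1, show x + (a+1) = x + a + 1 from by ring]
      · simp
    have hT : ∑ a ∈ Finset.range (n+1+1), ((n+1).choose a : R) * (Dop^[a] f x * Dop^[n+1-a] g (x+a))
        = (∑ a ∈ Finset.range (n+1), (n.choose a : R) * (Dop^[a+1] f x * Dop^[n-a] g (x+a+1)))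
          + ((∑ a ∈ Finset.range n,
              ((n.choose (a+1) : ℕ) : R) * (Dop^[a+1] f x * Dop^[n-a] g (x+a+1)))
            + Dop^[0] f x * Dop^[n+1] g x) := by
      rw [Finset.sum_range_succ']
      have step : ∀ a ∈ Finset.range (n+1),
          (((n+1).choose (a+1) : ℕ) : R) * (Dop^[a+1] f x * Dop^[n+1-(a+1)] g (x+(a+1)))
          = (n.choose a : R) * (Dop^[a+1] f x * Dop^[n-a] g (x+a+1))
            + ((n.choose (a+1) : ℕ) : R) * (Dop^[a+1] f x * Dop^[n-a] g (x+a+1)) := by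
        intro a _
        rw [Nat.choose_succ_succ, show n+1-(a+1) = n-a from by omega,
          show x + (a+1) = x + a + 1 from by ring]
        push_cast
        ring
      rw [Finset.sum_congr rfl step, Finset.sum_add_distrib]
      rw [Finset.sum_range_succ (fun a =>
        ((n.choose (a+1) : ℕ) : R) * (Dop^[a+1] f x * Dop^[n-a] g (x+a+1)))]
      simp only [Nat.choose_succ_self, Nat.cast_zero, zero_mul, add_zero,
        Nat.choose_zero_right, Nat.cast_one, one_mul, Nat.sub_zero, Nat.add_sub_cancel, add_zero]
      ring
    rw [hS3, hT]
    ring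

lemma Dop_iter_one (m x : ℕ) :
    Dop^[m] (fun _ => (1 : R)) x = if m = 0 then 1 else 0 := by
  cases m with
  | zero => rfl
  | succ n =>
    have h0 : Dop (fun _ => (1:R)) = fun _ => (0:R) := by
      funext y; simp [Dop_apply]
    have hz : ∀ p : ℕ, Dop^[p] (fun _ => (0:R)) = fun _ => (0:R) := by
      intro p
      induction p with
      | zero => rfl
      | succ p ih => rw [Function.iterate_succ_apply, show Dop (fun _ => (0:R)) = fun _ => (0:R)
          from by funext y; simp [Dop_apply], ih]
    rw [Function.iterate_succ_apply, h0, hz]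
    simp

lemma Iio_succ_eq (k : ℕ) (j : Fin k) :
    Finset.Iio (Fin.succ j) =
      Finset.cons 0 ((Finset.Iio j).map (Fin.succEmb k)) (by simp [Fin.succ_ne_zero]) := by
  ext x
  refine Fin.cases ?_ ?_ x
  · simp [Fin.succ_pos]
  · intro y
    simp only [Finset.mem_Iio, Finset.cons_eq_insert, Finset.mem_insert, Finset.mem_map,
      Fin.succ_lt_succ_iff]
    constructor
    · intro hy; exact Or.inr ⟨y, by simpa using hy, rfl⟩
    · rintro (h | ⟨z, hz, h⟩)
      · exact absurd h (Fin.succ_ne_zero y)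
      · have : z = y := Fin.succ_injective _ h
        subst this
        simpa using hz

lemma sum_Iio_cons_succ {M : Type*} [AddCommMonoid M] {k : ℕ} (a : M) (t : Fin k → M)
    (j : Fin k) :
    ∑ l ∈ Finset.Iio (Fin.succ j), (Fin.cons a t : Fin (k+1) → M) l
      = a + ∑ l ∈ Finset.Iio j, t l := by
  rw [Iio_succ_eq, Finset.sum_cons, Finset.sum_map, Fin.cons_zero]
  exact congrArg (a + ·) (Finset.sum_congr rfl fun l _ => by simp)

lemma multinomial_univ_cons {k : ℕ} (a : ℕ) (t : Fin k → ℕ) :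
    Nat.multinomial Finset.univ (Fin.cons a t : Fin (k+1) → ℕ)
      = (a + ∑ j, t j).choose a * Nat.multinomial Finset.univ t := by
  rw [Fin.univ_succ, Nat.multinomial_cons]
  have h1 : ∑ i ∈ Finset.univ.map ⟨Fin.succ, Fin.succ_injective k⟩,
      (Fin.cons a t : Fin (k+1) → ℕ) i = ∑ j, t j := by
    rw [Finset.sum_map]
    exact Finset.sum_congr rfl fun i _ => by simp
  rw [Fin.cons_zero, h1]
  congr 1
  unfold Nat.multinomial
  rw [Finset.sum_map, Finset.prod_map]
  simp only [Function.Embedding.coeFn_mk, Fin.cons_succ]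

lemma sum_antidiagonalTuple_succ {M : Type*} [AddCommMonoid M] (k m : ℕ)
    (G : (Fin (k+1) → ℕ) → M) :
    ∑ t ∈ Finset.Nat.antidiagonalTuple (k+1) m, G t
      = ∑ p ∈ Finset.HasAntidiagonal.antidiagonal m,
          ∑ t ∈ Finset.Nat.antidiagonalTuple k p.2, G (Fin.cons p.1 t) := by
  rw [Finset.sum_sigma']
  refine Finset.sum_nbij' (fun t => ⟨(t 0, ∑ j : Fin k, t (Fin.succ j)), fun j => t (Fin.succ j)⟩)
    (fun p => Fin.cons p.1.1 p.2) ?_ ?_ ?_ ?_ ?_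
  · intro t ht
    rw [Finset.Nat.mem_antidiagonalTuple] at ht
    refine Finset.mem_sigma.mpr ⟨?_, ?_⟩
    · simp only [Finset.HasAntidiagonal.mem_antidiagonal]
      rw [← ht, Fin.sum_univ_succ]
    · exact Finset.Nat.mem_antidiagonalTuple.mpr rfl
  · intro p hp
    rw [Finset.mem_sigma, Finset.HasAntidiagonal.mem_antidiagonal, Finset.Nat.mem_antidiagonalTuple] at hp
    rw [Finset.Nat.mem_antidiagonalTuple, Fin.sum_univ_succ, Fin.cons_zero]
    simp only [Fin.cons_succ]
    rw [hp.2]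
    exact hp.1
  · intro t _
    exact Fin.cons_self_tail t
  · intro p hp
    rw [Finset.mem_sigma, Finset.Nat.mem_antidiagonalTuple] at hp
    refine Sigma.ext ?_ ?_
    · simp only [Fin.cons_zero, Fin.cons_succ]
      rw [hp.2]
    · simp only [Fin.cons_succ]
      exact heq_of_eq rfl
  · intro t _
    exact congrArg G (Fin.cons_self_tail t).symm

lemma Dop_iter_prod (k : ℕ) (f : Fin k → ℕ → R) (m x : ℕ) :
    Dop^[m] (fun i => ∏ j, f j i) x
      = ∑ t ∈ Finset.Nat.antidiagonalTuple k m,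
          (Nat.multinomial Finset.univ t : R) *
            ∏ j, Dop^[t j] (f j) (x + ∑ l ∈ Finset.Iio j, t l) := by
  induction k generalizing m x with
  | zero =>
    have h1 : (fun i : ℕ => ∏ j : Fin 0, f j i) = fun _ => (1:R) := by funext i; simp
    rw [h1, Dop_iter_one]
    cases m with
    | zero => simp
    | succ n => simp
  | succ k ih =>
    have hsplit : (fun i : ℕ => ∏ j : Fin (k+1), f j i)
        = fun i => f 0 i * ∏ j : Fin k, f (Fin.succ j) i := by
      funext i; rw [Fin.prod_univ_succ]
    rw [hsplit, Dop_iter_mul]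
    rw [sum_antidiagonalTuple_succ k m (fun u => (Nat.multinomial Finset.univ u : R) *
        ∏ j, Dop^[u j] (f j) (x + ∑ l ∈ Finset.Iio j, u l))]
    rw [Finset.Nat.sum_antidiagonal_eq_sum_range_succ_mk]
    refine Finset.sum_congr rfl fun a ha => ?_
    have ham : a ≤ m := Nat.lt_succ_iff.mp (Finset.mem_range.mp ha)
    rw [ih (fun j => f (Fin.succ j)) (m-a) (x+a)]
    simp only [Finset.mul_sum]
    refine Finset.sum_congr rfl fun t ht => ?_
    have hts : ∑ j, t j = m - a := Finset.Nat.mem_antidiagonalTuple.mp ht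
    have hmult : Nat.multinomial Finset.univ (Fin.cons a t : Fin (k+1) → ℕ)
        = m.choose a * Nat.multinomial Finset.univ t := by
      rw [multinomial_univ_cons, hts, Nat.add_sub_cancel' ham]
    have hprod : (∏ j : Fin (k+1), Dop^[(Fin.cons a t : Fin (k+1) → ℕ) j] (f j)
          (x + ∑ l ∈ Finset.Iio j, (Fin.cons a t : Fin (k+1) → ℕ) l))
        = Dop^[a] (f 0) x *
            ∏ j : Fin k, Dop^[t j] (f (Fin.succ j)) ((x+a) + ∑ l ∈ Finset.Iio j, t l) := by
      rw [Fin.prod_univ_succ]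
      have h0 : Finset.Iio (0 : Fin (k+1)) = ∅ := by
        ext l; simp
      have hfirst : Dop^[(Fin.cons a t : Fin (k+1) → ℕ) 0] (f 0)
          (x + ∑ l ∈ Finset.Iio (0 : Fin (k+1)), (Fin.cons a t : Fin (k+1) → ℕ) l)
          = Dop^[a] (f 0) x := by
        rw [Fin.cons_zero, h0]
        simp
      rw [hfirst]
      congr 1
      refine Finset.prod_congr rfl fun j _ => ?_
      rw [Fin.cons_succ, sum_Iio_cons_succ]
      rw [← add_assoc]
    rw [hmult, hprod]
    push_cast
    ring

lemma Dop_shift_base (u : ℕ → R) (c : ℕ) :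
    Dop (fun a => u (a + c)) = fun x => Dop u (x + c) := by
  funext x
  simp only [Dop_apply]
  rw [show x + 1 + c = x + c + 1 by ring]

lemma Dop_iter_shift_base (u : ℕ → R) (c m x : ℕ) :
    Dop^[m] (fun a => u (a + c)) x = Dop^[m] u (x + c) := by
  induction m generalizing u x with
  | zero => rfl
  | succ n ih =>
    rw [Function.iterate_succ_apply, Function.iterate_succ_apply, Dop_shift_base, ih]

lemma Dop_iter_eq_sum (f : ℕ → R) (m x : ℕ) :
    Dop^[m] f x = ∑ i ∈ Finset.range (m + 1), (-1 : R) ^ i * (m.choose i : R) * f (x + i) := by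
  induction m generalizing x with
  | zero => simp
  | succ n ih =>
    rw [Dop_iter_apply_sub, ih, ih]
    simp only [show ∀ i : ℕ, x + 1 + i = x + (i + 1) from fun i => by ring]
    rw [Finset.sum_range_succ' (fun i => (-1:R)^i * ((n+1).choose i : R) * f (x + i))]
    rw [Finset.sum_range_succ' (fun i => (-1:R)^i * (n.choose i : R) * f (x + i))]
    have key : ∀ i ∈ Finset.range (n+1),
        (-1:R)^(i+1) * (((n+1).choose (i+1) : ℕ) : R) * f (x+(i+1))
        = -((-1:R)^i * (n.choose i : R) * f (x+(i+1)))
          + (-1:R)^(i+1) * ((n.choose (i+1) : ℕ) : R) * f (x+(i+1)) := by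
      intro i _
      rw [Nat.choose_succ_succ]
      push_cast
      ring
    rw [Finset.sum_congr rfl key, Finset.sum_add_distrib]
    rw [Finset.sum_range_succ (fun i => (-1:R)^(i+1) * ((n.choose (i+1) : ℕ) : R) * f (x+(i+1)))]
    simp only [Nat.choose_succ_self, Nat.cast_zero, mul_zero, zero_mul, add_zero,
      Nat.choose_zero_right, Nat.cast_one, pow_zero, one_mul, mul_one, Finset.sum_neg_distrib]
    ring

end



/-!
STATEMENT 2: For integers m ≥ 0 and h ≥ k ≥ 1, the q-Bernoulli number of order k
decomposes as a multinomial convolution of q-Bernoulli numbers of order 1: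
β_m^{(h,k)} = Σ_{i_1+⋯+i_k=m} (m!/(i_1!⋯i_k!)) Π_{j=1}^{k}
  β_{i_j}^{(h−j+1+i_1+⋯+i_{j−1}, 1)},  an identity in F = ℂ(q).
-/

noncomputable section

/-- The field F = ℂ(q) of rational functions in one variable q. -/
abbrev F : Type := RatFunc ℂ

/-- The variable q ∈ ℂ(q). -/
def q : F := RatFunc.X

/-- The q-integer [n]_q = Σ_{j=0}^{n-1} q^{-2j}. -/
def qnum (n : ℕ) : F := ∑ j ∈ Finset.range n, (q⁻¹ ^ 2) ^ j

/-- The falling factorial (a)_b = a(a−1)⋯(a−b+1), for a natural, in F. -/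
def fallF (a b : ℕ) : F := ∏ j ∈ Finset.range b, ((a : F) - (j : F))

/-- The q-falling factorial ([a]_q)_b = [a]_q [a−1]_q ⋯ [a−b+1]_q (used with a ≥ b). -/
def qfallF (a b : ℕ) : F := ∏ j ∈ Finset.range b, qnum (a - j)

/-- The q-Bernoulli polynomial of order k,
β_m^{(h,k)}(s) = (1 − q^{-2})^{-m} Σ_{i=0}^{m} C(m,i) ((i+h)_k/([i+h]_q)_k)(−s)^i,
as a polynomial in the variable s over F (s stands for q^{-2ξ}). -/
def qBernoulliPoly (m h k : ℕ) : Polynomial F :=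
  Polynomial.C ((1 - q⁻¹ ^ 2)⁻¹ ^ m) *
    ∑ i ∈ Finset.range (m + 1),
      Polynomial.C ((m.choose i : F) * (fallF (i + h) k / qfallF (i + h) k)) *
        (- Polynomial.X) ^ i

/-- The q-Bernoulli number β_m^{(h,k)} = β_m^{(h,k)}(1) (value at s = 1, i.e. ξ = 0). -/
def qBernoulliNum (m h k : ℕ) : F := (qBernoulliPoly m h k).eval 1

/-- The basic building block `t / [t]_q`. -/
def qg (t : ℕ) : F := (t : F) / qnum t

lemma qBernoulliNum_eq_Dop (m h k : ℕ) (hhk : k ≤ h) :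
    qBernoulliNum m h k
      = ((1 - q⁻¹ ^ 2)⁻¹) ^ m *
          Dop^[m] (fun i => ∏ j ∈ Finset.range k, qg (i + h - j)) 0 := by
  rw [Dop_iter_eq_sum]
  unfold qBernoulliNum qBernoulliPoly
  rw [Polynomial.eval_mul, Polynomial.eval_C, Polynomial.eval_finset_sum]
  congr 1
  refine Finset.sum_congr rfl fun i _ => ?_
  rw [Polynomial.eval_mul, Polynomial.eval_C, Polynomial.eval_pow, Polynomial.eval_neg,
    Polynomial.eval_X]
  have hratio : fallF (i + h) k / qfallF (i + h) k
      = ∏ j ∈ Finset.range k, qg (i + h - j) := by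
    unfold qg
    rw [Finset.prod_div_distrib]
    congr 1
    unfold fallF
    refine Finset.prod_congr rfl fun j hj => ?_
    have hj' : j ≤ i + h :=
      le_trans (le_of_lt (Finset.mem_range.mp hj)) (le_trans hhk (Nat.le_add_left h i))
    rw [Nat.cast_sub hj']
  rw [hratio]
  simp only [zero_add]
  ring

/-- β_m^{(h,k)} = Σ over k-tuples (i_1,…,i_k) with i_1+⋯+i_k = m of the multinomial
coefficient m!/(i_1!⋯i_k!) times Π_{j=1}^{k} β_{i_j}^{(h−j+1+i_1+⋯+i_{j−1},1)}.
Here tuples are 0-indexed: the j-th factor (j : Fin k, 1-indexed j.val + 1) has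
superscript h − (j.val+1) + 1 + Σ_{l<j} i_l. -/
theorem qBernoulliNum_multinomial (m h k : ℕ) (hk : 1 ≤ k) (hhk : k ≤ h) :
    qBernoulliNum m h k =
      ∑ i ∈ Finset.Nat.antidiagonalTuple k m,
        (Nat.multinomial Finset.univ i : F) *
          ∏ j : Fin k,
            qBernoulliNum (i j) (h - (j.val + 1) + 1 + ∑ l ∈ Finset.Iio j, i l) 1 := by
  have hb : ∀ j : Fin k, j.val < h := fun j => lt_of_lt_of_le j.isLt hhk
  rw [qBernoulliNum_eq_Dop m h k hhk]
  have hprod_fin : (fun i : ℕ => ∏ j ∈ Finset.range k, qg (i + h - j))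
      = fun i => ∏ j : Fin k, (fun (j : Fin k) (a : ℕ) => qg (a + (h - j.val))) j i := by
    funext i
    rw [Finset.prod_range (fun j => qg (i + h - j))]
    refine Finset.prod_congr rfl fun j _ => ?_
    rw [Nat.add_sub_assoc (le_of_lt (hb j)) i]
  rw [hprod_fin, Dop_iter_prod, Finset.mul_sum]
  refine Finset.sum_congr rfl fun t ht => ?_
  have htsum : ∑ j, t j = m := Finset.Nat.mem_antidiagonalTuple.mp ht
  have hfac : ∀ j : Fin k,
      qBernoulliNum (t j) (h - (j.val + 1) + 1 + ∑ l ∈ Finset.Iio j, t l) 1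
        = ((1 - q⁻¹ ^ 2)⁻¹) ^ (t j) *
            Dop^[t j] (fun a : ℕ => qg (a + (h - j.val)))
              (0 + ∑ l ∈ Finset.Iio j, t l) := by
    intro j
    have hjh : j.val < h := hb j
    rw [qBernoulliNum_eq_Dop (t j) (h - (j.val + 1) + 1 + ∑ l ∈ Finset.Iio j, t l) 1 (by omega)]
    congr 1
    have hg1 : (fun i : ℕ => ∏ j' ∈ Finset.range 1,
          qg (i + (h - (j.val + 1) + 1 + ∑ l ∈ Finset.Iio j, t l) - j'))
        = fun i : ℕ => (fun a : ℕ => qg (a + (h - j.val))) (i + ∑ l ∈ Finset.Iio j, t l) := by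
      funext i
      rw [Finset.prod_range_one]
      have harith : i + (h - (j.val + 1) + 1 + ∑ l ∈ Finset.Iio j, t l) - 0
          = i + (∑ l ∈ Finset.Iio j, t l) + (h - j.val) := by omega
      rw [harith]
    rw [hg1, Dop_iter_shift_base (fun a : ℕ => qg (a + (h - j.val)))
      (∑ l ∈ Finset.Iio j, t l) (t j) 0]
  have hp : (∏ j : Fin k,
        qBernoulliNum (t j) (h - (j.val + 1) + 1 + ∑ l ∈ Finset.Iio j, t l) 1)
      = ∏ j : Fin k, (((1 - q⁻¹ ^ 2)⁻¹) ^ (t j) *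
          Dop^[t j] (fun a : ℕ => qg (a + (h - j.val))) (0 + ∑ l ∈ Finset.Iio j, t l)) :=
    Finset.prod_congr rfl fun j _ => hfac j
  rw [hp, Finset.prod_mul_distrib, Finset.prod_pow_eq_pow_sum, htsum]
  ring

end
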